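/- Let (H₁, H₂, σ) be a cocommutative Hopf truss over a field k, and define Γ(a ⊗ b) := λ(σ(a₁)) · (a₂ ∘ b). Then Γ is a coalgebra morphism: δ(Γ(a ⊗ b)) = Γ(a₁ ⊗ b₁) ⊗ Γ(a₂ ⊗ b₂) and ε(Γ(a ⊗ b)) = ε(a)ε(b). -/

import Mathlib

open TensorProduct

noncomputable def mbar (k : Type*) {H : Type*} [Field k] [Ring H] [HopfAlgebra k H]
    (Φ : H →ₗ[k] H) (m : H ⊗[k] H →ₗ[k] H) : H ⊗[k] H →ₗ[k] H :=
  (LinearMap.mul' k H) ∘ₗ (TensorProduct.map Φ m) ∘ₗ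
    (TensorProduct.assoc k H H H).toLinearMap ∘ₗ
    (TensorProduct.map Coalgebra.comul LinearMap.id)

/-- The map `a ⊗ b ⊗ c ↦ ρ(a₁ ⊗ b) · λ(σ(a₂)) · ρ(a₃ ⊗ c)`. -/
noncomputable def trussRHS (k : Type*) {H : Type*} [Field k] [Ring H] [HopfAlgebra k H]
    (σ : H →ₗ[k] H) (ρ : H ⊗[k] H →ₗ[k] H) : H ⊗[k] (H ⊗[k] H) →ₗ[k] H :=
  (LinearMap.mul' k H) ∘ₗ
    TensorProduct.map ρ
      ((LinearMap.mul' k H) ∘ₗ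
        TensorProduct.map ((HopfAlgebra.antipode (R := k)) ∘ₗ σ) ρ ∘ₗ
        (TensorProduct.assoc k H H H).toLinearMap) ∘ₗ
    (TensorProduct.tensorTensorTensorComm k H (H ⊗[k] H) H H).toLinearMap ∘ₗ
    TensorProduct.map ((TensorProduct.map LinearMap.id Coalgebra.comul) ∘ₗ Coalgebra.comul)
      LinearMap.id


namespace Stmt9Aux
open TensorProduct Coalgebra
set_option maxHeartbeats 1000000

variable {k H : Type*} [Field k] [Ring H] [HopfAlgebra k H]
variable {B : Type*} [Semiring B] [Algebra k B]

/-- convolution product -/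
noncomputable def conv (f g : H →ₗ[k] B) : H →ₗ[k] B :=
  LinearMap.mul' k B ∘ₗ TensorProduct.map f g ∘ₗ Coalgebra.comul

/-- convolution unit -/
noncomputable def cunit (k H B : Type*) [Field k] [Ring H] [HopfAlgebra k H] [Semiring B] [Algebra k B] : H →ₗ[k] B :=
  (Algebra.linearMap k B) ∘ₗ Coalgebra.counit

lemma cunit_apply (a : H) : (cunit k H B) a = algebraMap k B (Coalgebra.counit (R := k) a) :=
  rfl

lemma conv_apply (f g : H →ₗ[k] B) {a : H} (r : Coalgebra.Repr k a (H × H)) :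
    conv f g a = ∑ i ∈ r.index, f (r.left i) * g (r.right i) := by
  simp only [conv, LinearMap.comp_apply, ← r.eq, map_sum, TensorProduct.map_tmul,
    LinearMap.mul'_apply]

lemma sum_smul_counit_eq' {a : H} (r : Coalgebra.Repr k a (H × H)) :
    ∑ i ∈ r.index, Coalgebra.counit (R := k) (r.right i) • r.left i = a := by
  have h2 := congrArg (TensorProduct.rid k H) (Coalgebra.sum_tmul_counit_eq r)
  rw [map_sum] at h2
  simpa using h2

lemma sum_counit_smul_eq' {a : H} (r : Coalgebra.Repr k a (H × H)) :
    ∑ i ∈ r.index, Coalgebra.counit (R := k) (r.left i) • r.right i = a := by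
  have h2 := congrArg (TensorProduct.lid k H) (Coalgebra.sum_counit_tmul_eq r)
  rw [map_sum] at h2
  simpa using h2

lemma sum_counit_mul_counit' {a : H} (r : Coalgebra.Repr k a (H × H)) :
    ∑ i ∈ r.index, Coalgebra.counit (R := k) (r.left i) * Coalgebra.counit (R := k) (r.right i)
      = Coalgebra.counit (R := k) a := by
  have := congrArg (Coalgebra.counit (R := k)) (sum_counit_smul_eq' r)
  rw [map_sum] at this
  simpa [smul_eq_mul] using this

lemma conv_cunit_right (f : H →ₗ[k] B) : conv f (cunit k H B) = f := by
  ext a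
  rw [conv_apply f (cunit k H B) (ℛ k a)]
  have : ∀ i ∈ (ℛ k a).index,
      f ((ℛ k a).left i) * cunit k H B ((ℛ k a).right i)
        = Coalgebra.counit (R := k) ((ℛ k a).right i) • f ((ℛ k a).left i) := by
    intro i _
    rw [cunit_apply, Algebra.algebraMap_eq_smul_one, mul_smul_comm, mul_one]
  rw [Finset.sum_congr rfl this]
  simp_rw [← map_smul f, ← map_sum]
  rw [sum_smul_counit_eq']

lemma conv_cunit_left (f : H →ₗ[k] B) : conv (cunit k H B) f = f := by
  ext a
  rw [conv_apply (cunit k H B) f (ℛ k a)]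
  have : ∀ i ∈ (ℛ k a).index,
      cunit k H B ((ℛ k a).left i) * f ((ℛ k a).right i)
        = Coalgebra.counit (R := k) ((ℛ k a).left i) • f ((ℛ k a).right i) := by
    intro i _
    rw [cunit_apply, Algebra.algebraMap_eq_smul_one, smul_mul_assoc, one_mul]
  rw [Finset.sum_congr rfl this]
  simp_rw [← map_smul f, ← map_sum]
  rw [sum_counit_smul_eq']

lemma conv_assoc (f g h : H →ₗ[k] B) : conv (conv f g) h = conv f (conv g h) := by
  ext a
  set r := ℛ k a
  have key := Coalgebra.sum_map_tmul_tmul_eq (R := k) f g h a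
    (repr := r) (a₁ := fun i => ℛ k (r.left i)) (a₂ := fun i => ℛ k (r.right i))
  have key2 := congrArg (LinearMap.mul' k B ∘ₗ LinearMap.lTensor B (LinearMap.mul' k B)) key
  rw [map_sum, map_sum] at key2
  simp only [LinearMap.comp_apply, LinearMap.lTensor_tmul, LinearMap.mul'_apply, map_sum] at key2
  rw [conv_apply (conv f g) h r, conv_apply f (conv g h) r]
  calc ∑ i ∈ r.index, conv f g (r.left i) * h (r.right i)
      = ∑ i ∈ r.index, ∑ j ∈ (ℛ k (r.left i)).index,
          f ((ℛ k (r.left i)).left j) * (g ((ℛ k (r.left i)).right j) * h (r.right i)) := by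
        refine Finset.sum_congr rfl fun i _ => ?_
        rw [conv_apply f g (ℛ k (r.left i)), Finset.sum_mul]
        exact Finset.sum_congr rfl fun j _ => mul_assoc _ _ _
    _ = ∑ i ∈ r.index, ∑ j ∈ (ℛ k (r.right i)).index,
          f (r.left i) * (g ((ℛ k (r.right i)).left j) * h ((ℛ k (r.right i)).right j)) :=
        key2.symm
    _ = ∑ i ∈ r.index, f (r.left i) * conv g h (r.right i) := by
        refine Finset.sum_congr rfl fun i _ => ?_
        rw [conv_apply g h (ℛ k (r.right i)), Finset.mul_sum]
variable {k H : Type*} [Field k] [Ring H] [HopfAlgebra k H]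

lemma L1 (hcoc : ∀ a : H, (TensorProduct.comm k H H) (Coalgebra.comul (R := k) a)
      = Coalgebra.comul a) (a : H) :
    (TensorProduct.tensorTensorTensorComm k H H H H)
        (TensorProduct.map (Coalgebra.comul (R := k)) (Coalgebra.comul (R := k))
          (Coalgebra.comul (R := k) a))
      = TensorProduct.map (Coalgebra.comul (R := k)) (Coalgebra.comul (R := k))
          (Coalgebra.comul (R := k) a) := by
  set δ := (Coalgebra.comul : H →ₗ[k] H ⊗[k] H) with hδ
  have hτδ : (TensorProduct.comm k H H).toLinearMap ∘ₗ δ = δ := LinearMap.ext hcoc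
  set r := ℛ k a with hr
  set ra : (i : r.ι) → Coalgebra.Repr k (r.left i) (H × H) := fun i => ℛ k (r.left i) with hra
  set rb : (i : r.ι) → Coalgebra.Repr k (r.right i) (H × H) := fun i => ℛ k (r.right i) with hrb
  set ru : (i : r.ι) → (j : (ra i).ι) → Coalgebra.Repr k ((ra i).left j) (H × H) :=
    fun i j => ℛ k ((ra i).left j) with hru
  -- base expansion
  have base : TensorProduct.map δ δ (δ a) = ∑ i ∈ r.index, δ (r.left i) ⊗ₜ[k] δ (r.right i) := by
    rw [← r.eq, map_sum]
    simp only [TensorProduct.map_tmul]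
  -- coassociativity step
  have step2 : ∑ i ∈ r.index, δ (r.left i) ⊗ₜ[k] δ (r.right i)
      = ∑ i ∈ r.index, ∑ j ∈ (ra i).index,
          δ ((ra i).left j) ⊗ₜ[k] ((ra i).right j ⊗ₜ[k] r.right i) := by
    have h0 := Coalgebra.sum_tmul_tmul_eq r ra rb
    have h1 := congrArg (LinearMap.rTensor (H ⊗[k] H) δ) h0
    rw [map_sum, map_sum] at h1
    simp only [map_sum, LinearMap.rTensor_tmul] at h1
    rw [h1]
    refine Finset.sum_congr rfl fun i _ => ?_
    rw [← (rb i).eq, tmul_sum]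
  -- per-i shuffle using cocommutativity and coassociativity
  have perI : ∀ i, ∑ j ∈ (ra i).index, ∑ n ∈ (ru i j).index,
        ((ru i j).left n ⊗ₜ[k] (ra i).right j) ⊗ₜ[k] (ru i j).right n
      = ∑ j ∈ (ra i).index, ∑ n ∈ (ru i j).index,
        ((ru i j).left n ⊗ₜ[k] (ru i j).right n) ⊗ₜ[k] (ra i).right j := by
    intro i
    set A := LinearMap.rTensor H δ (δ (r.left i)) with hA
    have eqA1 : A = ∑ j ∈ (ra i).index, δ ((ra i).left j) ⊗ₜ[k] (ra i).right j := by
      rw [hA, ← (ra i).eq, map_sum]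
      simp only [LinearMap.rTensor_tmul]
    have eqA2 : A = ∑ j ∈ (ra i).index, ∑ n ∈ (ru i j).index,
        ((ru i j).left n ⊗ₜ[k] (ru i j).right n) ⊗ₜ[k] (ra i).right j := by
      rw [eqA1]
      refine Finset.sum_congr rfl fun j _ => ?_
      rw [← (ru i j).eq, sum_tmul]
    set φ : (H ⊗[k] H) ⊗[k] H →ₗ[k] (H ⊗[k] H) ⊗[k] H :=
      (TensorProduct.assoc k H H H).symm.toLinearMap ∘ₗ
        LinearMap.lTensor H (TensorProduct.comm k H H).toLinearMap ∘ₗ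
        (TensorProduct.assoc k H H H).toLinearMap with hφ
    have φfix : φ A = A := by
      rw [hφ, hA]
      simp only [LinearMap.comp_apply, LinearEquiv.coe_coe]
      rw [Coalgebra.coassoc_apply, ← LinearMap.lTensor_comp_apply, hτδ,
        Coalgebra.coassoc_symm_apply]
    have φA : φ A = ∑ j ∈ (ra i).index, ∑ n ∈ (ru i j).index,
        ((ru i j).left n ⊗ₜ[k] (ra i).right j) ⊗ₜ[k] (ru i j).right n := by
      rw [eqA2, map_sum]
      refine Finset.sum_congr rfl fun j _ => ?_
      rw [map_sum]
      refine Finset.sum_congr rfl fun n _ => ?_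
      simp [hφ]
    rw [← φA, φfix, eqA2]
  -- assemble
  rw [base, step2, map_sum]
  calc ∑ i ∈ r.index, (TensorProduct.tensorTensorTensorComm k H H H H)
        (∑ j ∈ (ra i).index, δ ((ra i).left j) ⊗ₜ[k] ((ra i).right j ⊗ₜ[k] r.right i))
      = ∑ i ∈ r.index, ∑ j ∈ (ra i).index, ∑ n ∈ (ru i j).index,
          ((ru i j).left n ⊗ₜ[k] (ra i).right j) ⊗ₜ[k] ((ru i j).right n ⊗ₜ[k] r.right i) := by
        refine Finset.sum_congr rfl fun i _ => ?_
        rw [map_sum]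
        refine Finset.sum_congr rfl fun j _ => ?_
        rw [← (ru i j).eq, sum_tmul, map_sum]
        refine Finset.sum_congr rfl fun n _ => ?_
        simp [TensorProduct.tensorTensorTensorComm_tmul]
    _ = ∑ i ∈ r.index, ∑ j ∈ (ra i).index, ∑ n ∈ (ru i j).index,
          ((ru i j).left n ⊗ₜ[k] (ru i j).right n) ⊗ₜ[k] ((ra i).right j ⊗ₜ[k] r.right i) := by
        refine Finset.sum_congr rfl fun i _ => ?_
        have h := congrArg (LinearMap.lTensor (H ⊗[k] H)
          ((TensorProduct.mk k H H).flip (r.right i))) (perI i)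
        rw [map_sum, map_sum] at h
        simp only [map_sum, LinearMap.lTensor_tmul, TensorProduct.mk_apply,
          LinearMap.flip_apply] at h
        exact h
    _ = ∑ i ∈ r.index, ∑ j ∈ (ra i).index,
          δ ((ra i).left j) ⊗ₜ[k] ((ra i).right j ⊗ₜ[k] r.right i) := by
        refine Finset.sum_congr rfl fun i _ => Finset.sum_congr rfl fun j _ => ?_
        rw [← (ru i j).eq, sum_tmul]

lemma key (hcoc : ∀ a : H, (TensorProduct.comm k H H) (Coalgebra.comul (R := k) a)
      = Coalgebra.comul a) {a : H} (r : Coalgebra.Repr k a (H × H))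
    (ra : (i : r.ι) → Coalgebra.Repr k (r.left i) (H × H))
    (rb : (i : r.ι) → Coalgebra.Repr k (r.right i) (H × H)) :
    ∑ i ∈ r.index, ∑ j ∈ (ra i).index, ∑ m ∈ (rb i).index,
      ((ra i).left j ⊗ₜ[k] (rb i).left m) ⊗ₜ[k] ((ra i).right j ⊗ₜ[k] (rb i).right m)
    = ∑ i ∈ r.index, ∑ j ∈ (ra i).index, ∑ m ∈ (rb i).index,
      ((ra i).left j ⊗ₜ[k] (ra i).right j) ⊗ₜ[k] ((rb i).left m ⊗ₜ[k] (rb i).right m) := by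
  set δ := (Coalgebra.comul : H →ₗ[k] H ⊗[k] H) with hδ
  have collapse : ∑ i ∈ r.index, ∑ j ∈ (ra i).index, ∑ m ∈ (rb i).index,
      ((ra i).left j ⊗ₜ[k] (ra i).right j) ⊗ₜ[k] ((rb i).left m ⊗ₜ[k] (rb i).right m)
      = TensorProduct.map δ δ (δ a) := by
    rw [← r.eq, map_sum]
    refine Finset.sum_congr rfl fun i _ => ?_
    rw [TensorProduct.map_tmul, ← (ra i).eq, ← (rb i).eq, sum_tmul]
    exact Finset.sum_congr rfl fun j _ => (tmul_sum _ _ _).symm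
  have lhs : ∑ i ∈ r.index, ∑ j ∈ (ra i).index, ∑ m ∈ (rb i).index,
      ((ra i).left j ⊗ₜ[k] (rb i).left m) ⊗ₜ[k] ((ra i).right j ⊗ₜ[k] (rb i).right m)
      = (TensorProduct.tensorTensorTensorComm k H H H H)
          (TensorProduct.map δ δ (δ a)) := by
    rw [← r.eq, map_sum, map_sum]
    refine Finset.sum_congr rfl fun i _ => ?_
    rw [TensorProduct.map_tmul, ← (ra i).eq, ← (rb i).eq, sum_tmul, map_sum]
    refine Finset.sum_congr rfl fun j _ => ?_
    rw [tmul_sum, map_sum]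
    exact Finset.sum_congr rfl fun m _ => by
      rw [TensorProduct.tensorTensorTensorComm_tmul]
  rw [lhs, collapse, L1 hcoc]

lemma counit_antipode' (a : H) :
    Coalgebra.counit (R := k) (HopfAlgebra.antipode (R := k) (A := H) a)
      = Coalgebra.counit (R := k) a := by
  set r := ℛ k a with hr
  calc Coalgebra.counit (R := k) (HopfAlgebra.antipode (R := k) (A := H) a)
      = Coalgebra.counit (R := k) (HopfAlgebra.antipode (R := k) (A := H)
          (∑ i ∈ r.index, Coalgebra.counit (R := k) (r.right i) • r.left i)) := by
        rw [sum_smul_counit_eq']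
    _ = ∑ i ∈ r.index, Coalgebra.counit (R := k)
          (HopfAlgebra.antipode (R := k) (A := H) (r.left i)) * Coalgebra.counit (R := k)
          (r.right i) := by
        rw [map_sum, map_sum]
        refine Finset.sum_congr rfl fun i _ => ?_
        rw [map_smul, map_smul, smul_eq_mul, mul_comm]
    _ = ∑ i ∈ r.index, Coalgebra.counit (R := k)
          (HopfAlgebra.antipode (R := k) (A := H) (r.left i) * r.right i) := by
        exact Finset.sum_congr rfl fun i _ => (Bialgebra.counit_mul _ _).symm
    _ = Coalgebra.counit (R := k)
          (∑ i ∈ r.index, HopfAlgebra.antipode (R := k) (A := H) (r.left i) * r.right i) := by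
        rw [map_sum]
    _ = Coalgebra.counit (R := k) a := by
        rw [HopfAlgebra.sum_antipode_mul_eq_algebraMap_counit r, Bialgebra.counit_algebraMap]

lemma antipode_comul' (hcoc : ∀ a : H, (TensorProduct.comm k H H) (Coalgebra.comul (R := k) a)
      = Coalgebra.comul a) :
    (Coalgebra.comul (R := k) (A := H)) ∘ₗ HopfAlgebra.antipode (R := k)
      = TensorProduct.map (HopfAlgebra.antipode (R := k)) (HopfAlgebra.antipode (R := k)) ∘ₗ
        Coalgebra.comul := by
  set S := (HopfAlgebra.antipode (R := k) : H →ₗ[k] H) with hS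
  set δ := (Coalgebra.comul : H →ₗ[k] H ⊗[k] H) with hδ
  have h1 : conv (δ ∘ₗ S) δ = cunit k H (H ⊗[k] H) := by
    ext a
    rw [conv_apply _ _ (ℛ k a), cunit_apply]
    calc ∑ i ∈ (ℛ k a).index, (δ ∘ₗ S) ((ℛ k a).left i) * δ ((ℛ k a).right i)
        = ∑ i ∈ (ℛ k a).index, δ (S ((ℛ k a).left i) * (ℛ k a).right i) := by
          exact Finset.sum_congr rfl fun i _ => (Bialgebra.comul_mul _ _).symm
      _ = δ (∑ i ∈ (ℛ k a).index, S ((ℛ k a).left i) * (ℛ k a).right i) := (map_sum δ _ _).symm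
      _ = algebraMap k (H ⊗[k] H) (Coalgebra.counit (R := k) a) := by
          rw [HopfAlgebra.sum_antipode_mul_eq_algebraMap_counit (ℛ k a), Bialgebra.comul_algebraMap]
  have h3 : conv δ (TensorProduct.map S S ∘ₗ δ) = cunit k H (H ⊗[k] H) := by
    ext a
    set r := ℛ k a with hr
    set ra : (i : r.ι) → Coalgebra.Repr k (r.left i) (H × H) := fun i => ℛ k (r.left i) with hra
    set rb : (i : r.ι) → Coalgebra.Repr k (r.right i) (H × H) := fun i => ℛ k (r.right i) with hrb
    rw [conv_apply _ _ r, cunit_apply]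
    have hkey := congrArg (TensorProduct.map
        ((LinearMap.mul' k H) ∘ₗ LinearMap.lTensor H S)
        ((LinearMap.mul' k H) ∘ₗ LinearMap.lTensor H S)) (key hcoc r ra rb)
    rw [map_sum, map_sum] at hkey
    simp only [map_sum, TensorProduct.map_tmul, LinearMap.comp_apply,
      LinearMap.lTensor_tmul, LinearMap.mul'_apply] at hkey
    calc ∑ i ∈ r.index, δ (r.left i) * (TensorProduct.map S S ∘ₗ δ) (r.right i)
        = ∑ i ∈ r.index, ∑ j ∈ (ra i).index, ∑ m ∈ (rb i).index,
            ((ra i).left j * S ((rb i).left m)) ⊗ₜ[k]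
              ((ra i).right j * S ((rb i).right m)) := by
          refine Finset.sum_congr rfl fun i _ => ?_
          rw [LinearMap.comp_apply, ← (ra i).eq, ← (rb i).eq, map_sum, Finset.sum_mul_sum]
          exact Finset.sum_congr rfl fun j _ => Finset.sum_congr rfl fun m _ => by
            rw [TensorProduct.map_tmul, Algebra.TensorProduct.tmul_mul_tmul]
      _ = ∑ i ∈ r.index, ∑ j ∈ (ra i).index, ∑ m ∈ (rb i).index,
            ((ra i).left j * S ((ra i).right j)) ⊗ₜ[k]
              ((rb i).left m * S ((rb i).right m)) := hkey
      _ = ∑ i ∈ r.index, algebraMap k H (Coalgebra.counit (R := k) (r.left i)) ⊗ₜ[k]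
            algebraMap k H (Coalgebra.counit (R := k) (r.right i)) := by
          refine Finset.sum_congr rfl fun i _ => ?_
          rw [← HopfAlgebra.sum_mul_antipode_eq_algebraMap_counit (ra i), ← HopfAlgebra.sum_mul_antipode_eq_algebraMap_counit (rb i),
            sum_tmul]
          exact Finset.sum_congr rfl fun j _ => (tmul_sum _ _ _).symm
      _ = algebraMap k (H ⊗[k] H) (Coalgebra.counit (R := k) a) := by
          rw [← sum_counit_mul_counit' r, map_sum]
          refine Finset.sum_congr rfl fun i _ => ?_
          rw [Algebra.TensorProduct.algebraMap_apply, Algebra.algebraMap_eq_smul_one,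
            Algebra.algebraMap_eq_smul_one, Algebra.algebraMap_eq_smul_one]
          rw [tmul_smul, smul_tmul', smul_smul, mul_comm]
  calc δ ∘ₗ S = conv (δ ∘ₗ S) (cunit k H (H ⊗[k] H)) := (conv_cunit_right _).symm
    _ = conv (δ ∘ₗ S) (conv δ (TensorProduct.map S S ∘ₗ δ)) := by rw [h3]
    _ = conv (conv (δ ∘ₗ S) δ) (TensorProduct.map S S ∘ₗ δ) := (conv_assoc _ _ _).symm
    _ = conv (cunit k H (H ⊗[k] H)) (TensorProduct.map S S ∘ₗ δ) := by rw [h1]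
    _ = TensorProduct.map S S ∘ₗ δ := conv_cunit_left _

lemma mbar_apply' (Φ : H →ₗ[k] H) (ρ : H ⊗[k] H →ₗ[k] H) {a : H} (b : H)
    (r : Coalgebra.Repr k a (H × H)) :
    mbar k Φ ρ (a ⊗ₜ[k] b) = ∑ i ∈ r.index, Φ (r.left i) * ρ (r.right i ⊗ₜ[k] b) := by
  simp only [mbar, LinearMap.comp_apply, TensorProduct.map_tmul, LinearMap.id_coe, id_eq]
  rw [← r.eq, sum_tmul, map_sum, map_sum, map_sum]
  exact Finset.sum_congr rfl fun i _ => by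
    simp only [LinearEquiv.coe_coe, TensorProduct.assoc_tmul, TensorProduct.map_tmul,
      LinearMap.mul'_apply]

end Stmt9Aux

open Stmt9Aux Coalgebra

theorem stmt9 (k H : Type*) [Field k] [Ring H] [HopfAlgebra k H]
    (ρ : H ⊗[k] H →ₗ[k] H) (σ : H →ₗ[k] H)
    (hρ_assoc : ρ ∘ₗ TensorProduct.map LinearMap.id ρ
      = ρ ∘ₗ TensorProduct.map ρ LinearMap.id ∘ₗ
          (TensorProduct.assoc k H H H).symm.toLinearMap)
    (hρ_comul : Coalgebra.comul ∘ₗ ρ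
      = (TensorProduct.map ρ ρ) ∘ₗ (TensorProduct.tensorTensorTensorComm k H H H H).toLinearMap
          ∘ₗ (TensorProduct.map Coalgebra.comul Coalgebra.comul))
    (hρ_counit : Coalgebra.counit ∘ₗ ρ
      = (TensorProduct.lid k k).toLinearMap ∘ₗ
          TensorProduct.map Coalgebra.counit Coalgebra.counit)
    (hσ_comul : Coalgebra.comul ∘ₗ σ = TensorProduct.map σ σ ∘ₗ Coalgebra.comul)
    (hσ_counit : Coalgebra.counit ∘ₗ σ = Coalgebra.counit)
    (hcompat : ρ ∘ₗ TensorProduct.map LinearMap.id (LinearMap.mul' k H) = trussRHS k σ ρ)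
    (hcoc : ∀ a : H, (TensorProduct.comm k H H) (Coalgebra.comul (R := k) a)
      = Coalgebra.comul a)
    :
    (Coalgebra.comul ∘ₗ mbar k ((HopfAlgebra.antipode (R := k)) ∘ₗ σ) ρ
      = (TensorProduct.map (mbar k ((HopfAlgebra.antipode (R := k)) ∘ₗ σ) ρ)
            (mbar k ((HopfAlgebra.antipode (R := k)) ∘ₗ σ) ρ)) ∘ₗ
          (TensorProduct.tensorTensorTensorComm k H H H H).toLinearMap ∘ₗ
          (TensorProduct.map Coalgebra.comul Coalgebra.comul)) ∧
    (Coalgebra.counit ∘ₗ mbar k ((HopfAlgebra.antipode (R := k)) ∘ₗ σ) ρ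
      = (TensorProduct.lid k k).toLinearMap ∘ₗ
          TensorProduct.map Coalgebra.counit Coalgebra.counit) := by
  set S := (HopfAlgebra.antipode (R := k) : H →ₗ[k] H) with hS
  set Φ := S ∘ₗ σ with hΦ
  -- Φ is a coalgebra morphism
  have hΦδ : ∀ x : H, Coalgebra.comul (R := k) (Φ x)
      = TensorProduct.map Φ Φ (Coalgebra.comul x) := by
    intro x
    have h1 := LinearMap.congr_fun (antipode_comul' hcoc) (σ x)
    have h2 := LinearMap.congr_fun hσ_comul x
    simp only [LinearMap.comp_apply] at h1 h2
    rw [hΦ, LinearMap.comp_apply, h1, h2, TensorProduct.map_comp, LinearMap.comp_apply]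
  -- ρ comul pointwise
  have hδρ : ∀ (x y : H) (rx : Coalgebra.Repr k x (H × H)) (ry : Coalgebra.Repr k y (H × H)),
      Coalgebra.comul (R := k) (ρ (x ⊗ₜ[k] y))
        = ∑ m ∈ rx.index, ∑ n ∈ ry.index,
            ρ (rx.left m ⊗ₜ[k] ry.left n) ⊗ₜ[k] ρ (rx.right m ⊗ₜ[k] ry.right n) := by
    intro x y rx ry
    have h := LinearMap.congr_fun hρ_comul (x ⊗ₜ[k] y)
    simp only [LinearMap.comp_apply, TensorProduct.map_tmul, LinearEquiv.coe_coe] at h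
    rw [h, ← rx.eq, ← ry.eq, sum_tmul, map_sum, map_sum]
    refine Finset.sum_congr rfl fun m _ => ?_
    rw [tmul_sum, map_sum, map_sum]
    exact Finset.sum_congr rfl fun n _ => by
      rw [TensorProduct.tensorTensorTensorComm_tmul, TensorProduct.map_tmul]
  constructor
  · apply TensorProduct.ext'
    intro a b
    set r := ℛ k a with hr
    set s := ℛ k b with hs
    set ra : (i : r.ι) → Coalgebra.Repr k (r.left i) (H × H) := fun i => ℛ k (r.left i) with hra
    set rb : (i : r.ι) → Coalgebra.Repr k (r.right i) (H × H) := fun i => ℛ k (r.right i) with hrb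
    -- the bridge, from cocommutativity
    have bridge : ∀ n, ∑ i ∈ r.index, ∑ j ∈ (ra i).index, ∑ m ∈ (rb i).index,
          (Φ ((ra i).left j) * ρ ((rb i).left m ⊗ₜ[k] s.left n)) ⊗ₜ[k]
            (Φ ((ra i).right j) * ρ ((rb i).right m ⊗ₜ[k] s.right n))
        = ∑ i ∈ r.index, ∑ j ∈ (ra i).index, ∑ m ∈ (rb i).index,
          (Φ ((ra i).left j) * ρ ((ra i).right j ⊗ₜ[k] s.left n)) ⊗ₜ[k]
            (Φ ((rb i).left m) * ρ ((rb i).right m ⊗ₜ[k] s.right n)) := by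
      intro n
      have hkey := congrArg (TensorProduct.map
          ((LinearMap.mul' k H) ∘ₗ TensorProduct.map Φ (ρ ∘ₗ (TensorProduct.mk k H H).flip (s.left n)))
          ((LinearMap.mul' k H) ∘ₗ TensorProduct.map Φ (ρ ∘ₗ (TensorProduct.mk k H H).flip (s.right n))))
        (key hcoc r ra rb)
      rw [map_sum, map_sum] at hkey
      simp only [map_sum, TensorProduct.map_tmul, LinearMap.comp_apply,
        LinearMap.mul'_apply, LinearMap.flip_apply, TensorProduct.mk_apply] at hkey
      exact hkey
    calc (Coalgebra.comul ∘ₗ mbar k Φ ρ) (a ⊗ₜ[k] b)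
        = ∑ i ∈ r.index, Coalgebra.comul (R := k) (Φ (r.left i)) *
            Coalgebra.comul (R := k) (ρ (r.right i ⊗ₜ[k] b)) := by
          rw [LinearMap.comp_apply, mbar_apply' Φ ρ b r, map_sum]
          exact Finset.sum_congr rfl fun i _ => Bialgebra.comul_mul _ _
      _ = ∑ i ∈ r.index, ∑ j ∈ (ra i).index, ∑ m ∈ (rb i).index, ∑ n ∈ s.index,
            (Φ ((ra i).left j) * ρ ((rb i).left m ⊗ₜ[k] s.left n)) ⊗ₜ[k]
              (Φ ((ra i).right j) * ρ ((rb i).right m ⊗ₜ[k] s.right n)) := by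
          refine Finset.sum_congr rfl fun i _ => ?_
          rw [hΦδ, ← (ra i).eq, map_sum, hδρ (r.right i) b (rb i) s, Finset.sum_mul_sum]
          refine Finset.sum_congr rfl fun j _ => Finset.sum_congr rfl fun m _ => ?_
          rw [TensorProduct.map_tmul, Finset.mul_sum]
          exact Finset.sum_congr rfl fun n _ => Algebra.TensorProduct.tmul_mul_tmul _ _ _ _
      _ = ∑ n ∈ s.index, ∑ i ∈ r.index, ∑ j ∈ (ra i).index, ∑ m ∈ (rb i).index,
            (Φ ((ra i).left j) * ρ ((rb i).left m ⊗ₜ[k] s.left n)) ⊗ₜ[k]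
              (Φ ((ra i).right j) * ρ ((rb i).right m ⊗ₜ[k] s.right n)) := by
          calc ∑ i ∈ r.index, ∑ j ∈ (ra i).index, ∑ m ∈ (rb i).index, ∑ n ∈ s.index,
                (Φ ((ra i).left j) * ρ ((rb i).left m ⊗ₜ[k] s.left n)) ⊗ₜ[k]
                  (Φ ((ra i).right j) * ρ ((rb i).right m ⊗ₜ[k] s.right n))
              = ∑ i ∈ r.index, ∑ j ∈ (ra i).index, ∑ n ∈ s.index, ∑ m ∈ (rb i).index,
                (Φ ((ra i).left j) * ρ ((rb i).left m ⊗ₜ[k] s.left n)) ⊗ₜ[k]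
                  (Φ ((ra i).right j) * ρ ((rb i).right m ⊗ₜ[k] s.right n)) :=
                Finset.sum_congr rfl fun i _ => Finset.sum_congr rfl fun j _ =>
                  Finset.sum_comm
            _ = ∑ i ∈ r.index, ∑ n ∈ s.index, ∑ j ∈ (ra i).index, ∑ m ∈ (rb i).index,
                (Φ ((ra i).left j) * ρ ((rb i).left m ⊗ₜ[k] s.left n)) ⊗ₜ[k]
                  (Φ ((ra i).right j) * ρ ((rb i).right m ⊗ₜ[k] s.right n)) :=
                Finset.sum_congr rfl fun i _ => Finset.sum_comm
            _ = ∑ n ∈ s.index, ∑ i ∈ r.index, ∑ j ∈ (ra i).index, ∑ m ∈ (rb i).index,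
                (Φ ((ra i).left j) * ρ ((rb i).left m ⊗ₜ[k] s.left n)) ⊗ₜ[k]
                  (Φ ((ra i).right j) * ρ ((rb i).right m ⊗ₜ[k] s.right n)) :=
                Finset.sum_comm
      _ = ∑ n ∈ s.index, ∑ i ∈ r.index, ∑ j ∈ (ra i).index, ∑ m ∈ (rb i).index,
            (Φ ((ra i).left j) * ρ ((ra i).right j ⊗ₜ[k] s.left n)) ⊗ₜ[k]
              (Φ ((rb i).left m) * ρ ((rb i).right m ⊗ₜ[k] s.right n)) :=
          Finset.sum_congr rfl fun n _ => bridge n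
      _ = ∑ i ∈ r.index, ∑ n ∈ s.index, ∑ j ∈ (ra i).index, ∑ m ∈ (rb i).index,
            (Φ ((ra i).left j) * ρ ((ra i).right j ⊗ₜ[k] s.left n)) ⊗ₜ[k]
              (Φ ((rb i).left m) * ρ ((rb i).right m ⊗ₜ[k] s.right n)) :=
          Finset.sum_comm
      _ = ((TensorProduct.map (mbar k Φ ρ) (mbar k Φ ρ)) ∘ₗ
            (TensorProduct.tensorTensorTensorComm k H H H H).toLinearMap ∘ₗ
            (TensorProduct.map Coalgebra.comul Coalgebra.comul)) (a ⊗ₜ[k] b) := by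
          simp only [LinearMap.comp_apply, TensorProduct.map_tmul, LinearEquiv.coe_coe]
          rw [← r.eq, ← s.eq, sum_tmul, map_sum, map_sum]
          refine Finset.sum_congr rfl fun i _ => ?_
          rw [tmul_sum, map_sum, map_sum]
          refine Finset.sum_congr rfl fun n _ => ?_
          rw [TensorProduct.tensorTensorTensorComm_tmul, TensorProduct.map_tmul,
            mbar_apply' Φ ρ (s.left n) (ra i), mbar_apply' Φ ρ (s.right n) (rb i), sum_tmul]
          exact Finset.sum_congr rfl fun j _ => (tmul_sum _ _ _).symm
  · apply TensorProduct.ext'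
    intro a b
    set r := ℛ k a with hr
    have hερ : ∀ (x y : H), Coalgebra.counit (R := k) (ρ (x ⊗ₜ[k] y))
        = Coalgebra.counit (R := k) x * Coalgebra.counit (R := k) y := by
      intro x y
      have h := LinearMap.congr_fun hρ_counit (x ⊗ₜ[k] y)
      simp only [LinearMap.comp_apply, TensorProduct.map_tmul, LinearEquiv.coe_coe,
        TensorProduct.lid_tmul, smul_eq_mul] at h
      exact h
    have hεΦ : ∀ x : H, Coalgebra.counit (R := k) (Φ x) = Coalgebra.counit (R := k) x := by
      intro x
      rw [hΦ, LinearMap.comp_apply, hS, counit_antipode', ← LinearMap.comp_apply, hσ_counit]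
    calc (Coalgebra.counit ∘ₗ mbar k Φ ρ) (a ⊗ₜ[k] b)
        = ∑ i ∈ r.index, Coalgebra.counit (R := k) (r.left i) *
            (Coalgebra.counit (R := k) (r.right i) * Coalgebra.counit (R := k) b) := by
          rw [LinearMap.comp_apply, mbar_apply' Φ ρ b r, map_sum]
          exact Finset.sum_congr rfl fun i _ => by
            rw [Bialgebra.counit_mul, hεΦ, hερ]
      _ = (∑ i ∈ r.index, Coalgebra.counit (R := k) (r.left i) *
            Coalgebra.counit (R := k) (r.right i)) * Coalgebra.counit (R := k) b := by
          rw [Finset.sum_mul]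
          exact Finset.sum_congr rfl fun i _ => (mul_assoc _ _ _).symm
      _ = Coalgebra.counit (R := k) a * Coalgebra.counit (R := k) b := by
          rw [sum_counit_mul_counit']
      _ = ((TensorProduct.lid k k).toLinearMap ∘ₗ
            TensorProduct.map Coalgebra.counit Coalgebra.counit) (a ⊗ₜ[k] b) := by
          simp only [LinearMap.comp_apply, TensorProduct.map_tmul, LinearEquiv.coe_coe,
            TensorProduct.lid_tmul, smul_eq_mul]
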